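/- Let A = U - V be a proper weak regular splitting of type II of A ∈ ℝ^{m×n} (proper splitting with U† ≥ 0 and VU† ≥ 0). Then A† ≥ 0 if and only if ρ(U†V) < 1. -/

import Mathlib

open Matrix Polynomial

/-- `X` is the Moore-Penrose inverse of `A`. -/
def IsMP {m n : ℕ} (A : Matrix (Fin m) (Fin n) ℝ) (X : Matrix (Fin n) (Fin m) ℝ) : Prop :=
  A * X * A = A ∧ X * A * X = X ∧ (A * X)ᵀ = A * X ∧ (X * A)ᵀ = X * A

/-- `A = U - V` is a proper splitting: `R(U)=R(A)` and `N(U)=N(A)`. -/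
def ProperSplitting {m n : ℕ} (A U V : Matrix (Fin m) (Fin n) ℝ) : Prop :=
  A = U - V ∧ LinearMap.range U.mulVecLin = LinearMap.range A.mulVecLin ∧
    LinearMap.ker U.mulVecLin = LinearMap.ker A.mulVecLin

/-- `μ : ℂ` is an eigenvalue of the real matrix `M`. -/
def IsEigen {n : ℕ} (M : Matrix (Fin n) (Fin n) ℝ) (μ : ℂ) : Prop :=
  ((M.map (algebraMap ℝ ℂ)).charpoly).IsRoot μ

/-- The spectral radius of a real square matrix. -/
noncomputable def specRad {n : ℕ} (M : Matrix (Fin n) (Fin n) ℝ) : ℝ :=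
  sSup {r : ℝ | ∃ μ : ℂ, IsEigen M μ ∧ r = ‖μ‖}

/-- Entrywise nonnegativity. -/
def EntryNonneg {m n : ℕ} (A : Matrix (Fin m) (Fin n) ℝ) : Prop := ∀ i j, 0 ≤ A i j

/-- Entrywise order. -/
def EntryLE {m n : ℕ} (A B : Matrix (Fin m) (Fin n) ℝ) : Prop := ∀ i j, A i j ≤ B i j

/-- Entrywise strict order. -/
def EntryLT {m n : ℕ} (A B : Matrix (Fin m) (Fin n) ℝ) : Prop := ∀ i j, A i j < B i j

open Filter

/-! ### Auxiliary algebraic lemmas -/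

lemma mulVec_ext' {m n : ℕ} {M N : Matrix (Fin m) (Fin n) ℝ}
    (h : ∀ v, M.mulVec v = N.mulVec v) : M = N := by
  ext i j
  have := congrFun (h (Pi.single j 1)) i
  simpa [Matrix.mulVec_single] using this

/-- symmetric idempotents with equal kernels are equal -/
lemma symm_idem_ker_eq {k : ℕ} {P Q : Matrix (Fin k) (Fin k) ℝ}
    (hP2 : P * P = P) (hPt : Pᵀ = P) (hQ2 : Q * Q = Q) (hQt : Qᵀ = Q)
    (hker : LinearMap.ker P.mulVecLin = LinearMap.ker Q.mulVecLin) : P = Q := by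
  have hQP : Q * P = Q := by
    apply mulVec_ext'
    intro v
    have hv : P.mulVec (v - P.mulVec v) = 0 := by
      have := congrArg (fun M => M.mulVec v) hP2
      simp [Matrix.mulVec_sub, this, Matrix.mulVec_mulVec]
    have hv' : Q.mulVec (v - P.mulVec v) = 0 := by
      have : (v - P.mulVec v) ∈ LinearMap.ker P.mulVecLin := hv
      rw [hker] at this
      exact this
    rw [Matrix.mulVec_sub] at hv'
    have : Q.mulVec v = Q.mulVec (P.mulVec v) := sub_eq_zero.mp hv'
    rw [← Matrix.mulVec_mulVec, ← this]
  have hPQ : P * Q = P := by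
    apply mulVec_ext'
    intro v
    have hv : Q.mulVec (v - Q.mulVec v) = 0 := by
      have := congrArg (fun M => M.mulVec v) hQ2
      simp [Matrix.mulVec_sub, this, Matrix.mulVec_mulVec]
    have hv' : P.mulVec (v - Q.mulVec v) = 0 := by
      have : (v - Q.mulVec v) ∈ LinearMap.ker Q.mulVecLin := hv
      rw [← hker] at this
      exact this
    rw [Matrix.mulVec_sub] at hv'
    have : P.mulVec v = P.mulVec (Q.mulVec v) := sub_eq_zero.mp hv'
    rw [← Matrix.mulVec_mulVec, ← this]
  have : Q = P := by
    calc Q = Qᵀ := hQt.symm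
      _ = (Q * P)ᵀ := by rw [hQP]
      _ = Pᵀ * Qᵀ := by rw [Matrix.transpose_mul]
      _ = P * Q := by rw [hPt, hQt]
      _ = P := hPQ
  exact this.symm

/-- symmetric idempotents with equal ranges are equal -/
lemma symm_idem_range_eq {k : ℕ} {P Q : Matrix (Fin k) (Fin k) ℝ}
    (hP2 : P * P = P) (hPt : Pᵀ = P) (hQ2 : Q * Q = Q) (hQt : Qᵀ = Q)
    (hr : LinearMap.range P.mulVecLin = LinearMap.range Q.mulVecLin) : P = Q := by
  have hQP : Q * P = P := by
    apply mulVec_ext'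
    intro v
    have : P.mulVec v ∈ LinearMap.range Q.mulVecLin := by
      rw [← hr]; exact ⟨v, rfl⟩
    obtain ⟨u, hu⟩ := this
    simp only [Matrix.mulVecLin_apply] at hu
    rw [← Matrix.mulVec_mulVec, ← hu, Matrix.mulVec_mulVec, hQ2, hu]
  have hPQ : P * Q = Q := by
    apply mulVec_ext'
    intro v
    have : Q.mulVec v ∈ LinearMap.range P.mulVecLin := by
      rw [hr]; exact ⟨v, rfl⟩
    obtain ⟨u, hu⟩ := this
    simp only [Matrix.mulVecLin_apply] at hu
    rw [← Matrix.mulVec_mulVec, ← hu, Matrix.mulVec_mulVec, hP2, hu]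
  calc P = Pᵀ := hPt.symm
    _ = (Q * P)ᵀ := by rw [hQP]
    _ = Pᵀ * Qᵀ := by rw [Matrix.transpose_mul]
    _ = P * Q := by rw [hPt, hQt]
    _ = Q := hPQ

section KeyIdentity
variable {m n : ℕ} {A U V : Matrix (Fin m) (Fin n) ℝ}
  {Ad Ud : Matrix (Fin n) (Fin m) ℝ}

lemma ker_XA (hA1 : A * Ad * A = A) :
    LinearMap.ker (Ad * A).mulVecLin = LinearMap.ker A.mulVecLin := by
  ext v
  simp only [LinearMap.mem_ker, Matrix.mulVecLin_apply]
  constructor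
  · intro h
    have : A.mulVec v = (A * (Ad * A)).mulVec v := by
      rw [← Matrix.mul_assoc, hA1]
    rw [this, ← Matrix.mulVec_mulVec, h, Matrix.mulVec_zero]
  · intro h
    rw [← Matrix.mulVec_mulVec, h, Matrix.mulVec_zero]

lemma range_AX (hA1 : A * Ad * A = A) :
    LinearMap.range (A * Ad).mulVecLin = LinearMap.range A.mulVecLin := by
  ext w
  simp only [LinearMap.mem_range, Matrix.mulVecLin_apply]
  constructor
  · rintro ⟨v, rfl⟩
    exact ⟨Ad.mulVec v, by rw [Matrix.mulVec_mulVec]⟩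
  · rintro ⟨v, rfl⟩
    refine ⟨A.mulVec v, ?_⟩
    rw [Matrix.mulVec_mulVec, Matrix.mul_assoc, ← Matrix.mul_assoc, hA1]

lemma idem_XA (hA1 : A * Ad * A = A) : (Ad * A) * (Ad * A) = Ad * A := by
  rw [Matrix.mul_assoc Ad A (Ad * A), ← Matrix.mul_assoc A Ad A, hA1]

lemma idem_AX (hA1 : A * Ad * A = A) : (A * Ad) * (A * Ad) = A * Ad := by
  rw [← Matrix.mul_assoc (A * Ad) A Ad, hA1]

/-- `Ad * A = Ud * U` -/
lemma XA_eq_XA (hA : IsMP A Ad) (hU : IsMP U Ud)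
    (hker : LinearMap.ker U.mulVecLin = LinearMap.ker A.mulVecLin) :
    Ad * A = Ud * U :=
  symm_idem_ker_eq (idem_XA hA.1) hA.2.2.2 (idem_XA hU.1) hU.2.2.2
    (by rw [ker_XA hA.1, ker_XA hU.1, hker])

/-- `A * Ad = U * Ud` -/
lemma AX_eq_AX (hA : IsMP A Ad) (hU : IsMP U Ud)
    (hr : LinearMap.range U.mulVecLin = LinearMap.range A.mulVecLin) :
    A * Ad = U * Ud :=
  symm_idem_range_eq (idem_AX hA.1) hA.2.2.1 (idem_AX hU.1) hU.2.2.1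
    (by rw [range_AX hA.1, range_AX hU.1, hr])

/-- the key identity `Ad = Ud + Ad * (V * Ud)` -/
lemma key_identity (hps : ProperSplitting A U V) (hA : IsMP A Ad) (hU : IsMP U Ud) :
    Ad = Ud + Ad * (V * Ud) := by
  obtain ⟨hAUV, hr, hker⟩ := hps
  have hV : V = U - A := by rw [hAUV]; abel
  have h1 : Ad * A = Ud * U := XA_eq_XA hA hU hker
  have h2 : A * Ad = U * Ud := AX_eq_AX hA hU hr
  have : Ad * (V * Ud) = Ad * (U * Ud) - Ad * (A * Ud) := by
    rw [hV, Matrix.sub_mul, Matrix.mul_sub]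
  rw [this, ← h2]
  have e1 : Ad * (A * Ud) = (Ad * A) * Ud := by rw [Matrix.mul_assoc]
  have e2 : Ad * (A * Ad) = Ad := by rw [← Matrix.mul_assoc, hA.2.1]
  rw [e1, h1, e2, hU.2.1]
  abel

end KeyIdentity


/-- charpoly root iff det vanishes -/
lemma charpoly_root_iff_det {k : ℕ} (M : Matrix (Fin k) (Fin k) ℂ) (μ : ℂ) :
    M.charpoly.IsRoot μ ↔ (μ • (1 : Matrix (Fin k) (Fin k) ℂ) - M).det = 0 := by
  have : M.charpoly.eval μ = (μ • (1 : Matrix (Fin k) (Fin k) ℂ) - M).det := by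
    rw [Matrix.charpoly]
    rw [show (Matrix.charmatrix M).det.eval μ
        = ((Matrix.charmatrix M).map (Polynomial.evalRingHom μ)).det from
      (RingHom.map_det (Polynomial.evalRingHom μ) (Matrix.charmatrix M)).symm ▸ rfl]
    · congr 1
      ext i j
      by_cases h : i = j
      · subst h
        simp [Matrix.charmatrix_apply_eq, Matrix.one_apply]
      · simp [Matrix.charmatrix_apply_ne _ _ _ h, Matrix.one_apply, h]
  rw [Polynomial.IsRoot, this]

lemma exists_eigenvector {k : ℕ} (M : Matrix (Fin k) (Fin k) ℂ) (μ : ℂ)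
    (h : M.charpoly.IsRoot μ) : ∃ z : Fin k → ℂ, z ≠ 0 ∧ M.mulVec z = μ • z := by
  rw [charpoly_root_iff_det] at h
  obtain ⟨v, hv0, hv⟩ := (Matrix.exists_mulVec_eq_zero_iff).2 h
  refine ⟨v, hv0, ?_⟩
  rw [Matrix.sub_mulVec, Matrix.smul_mulVec, Matrix.one_mulVec] at hv
  exact (sub_eq_zero.mp hv).symm

lemma isRoot_of_eigenvector {k : ℕ} (M : Matrix (Fin k) (Fin k) ℂ) (μ : ℂ)
    (z : Fin k → ℂ) (hz : z ≠ 0) (h : M.mulVec z = μ • z) : M.charpoly.IsRoot μ := by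
  rw [charpoly_root_iff_det]
  rw [← Matrix.exists_mulVec_eq_zero_iff]
  refine ⟨z, hz, ?_⟩
  rw [Matrix.sub_mulVec, Matrix.smul_mulVec, Matrix.one_mulVec, h, sub_self]

lemma specRad_set_finite {k : ℕ} (M : Matrix (Fin k) (Fin k) ℝ) :
    {r : ℝ | ∃ μ : ℂ, IsEigen M μ ∧ r = ‖μ‖}.Finite := by
  have hp : (M.map (algebraMap ℝ ℂ)).charpoly ≠ 0 :=
    (Matrix.charpoly_monic _).ne_zero
  have hfin : {μ : ℂ | IsEigen M μ}.Finite := Polynomial.finite_setOf_isRoot hp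
  have : {r : ℝ | ∃ μ : ℂ, IsEigen M μ ∧ r = ‖μ‖}
      ⊆ norm '' {μ : ℂ | IsEigen M μ} := by
    rintro r ⟨μ, h1, rfl⟩
    exact ⟨μ, h1, rfl⟩
  exact (hfin.image _).subset this

lemma specRad_lt_one_of_forall {k : ℕ} (M : Matrix (Fin k) (Fin k) ℝ)
    (h : ∀ μ : ℂ, IsEigen M μ → ‖μ‖ < 1) : specRad M < 1 := by
  rcases Set.eq_empty_or_nonempty
      {r : ℝ | ∃ μ : ℂ, IsEigen M μ ∧ r = ‖μ‖} with he | hne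
  · rw [specRad, he, Real.sSup_empty]; norm_num
  · have := hne.csSup_mem (specRad_set_finite M)
    obtain ⟨μ, hμ, hr⟩ := this
    rw [specRad, hr]
    exact h μ hμ

lemma abs_le_specRad_of_isEigen {k : ℕ} {M : Matrix (Fin k) (Fin k) ℝ} {μ : ℂ}
    (h : IsEigen M μ) : ‖μ‖ ≤ specRad M :=
  le_csSup (specRad_set_finite M).bddAbove ⟨μ, h, rfl⟩

lemma exists_eigen_ge_of_not_lt {k : ℕ} (M : Matrix (Fin k) (Fin k) ℝ)
    (h : ¬ specRad M < 1) : ∃ μ : ℂ, IsEigen M μ ∧ 1 ≤ ‖μ‖ := by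
  rcases Set.eq_empty_or_nonempty
      {r : ℝ | ∃ μ : ℂ, IsEigen M μ ∧ r = ‖μ‖} with he | hne
  · exfalso; apply h; rw [specRad, he, Real.sSup_empty]; norm_num
  · obtain ⟨μ, hμ, hr⟩ := hne.csSup_mem (specRad_set_finite M)
    exact ⟨μ, hμ, by rw [← hr]; exact not_lt.mp (by rwa [specRad] at h)⟩

section Analytic
open scoped Topology ENNReal NNReal

attribute [local instance] Matrix.linftyOpNormedRing Matrix.linftyOpNormedAlgebra

lemma spectrum_iff_isEigen {k : ℕ} (T : Matrix (Fin k) (Fin k) ℝ) (μ : ℂ) :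
    μ ∈ spectrum ℂ (T.map (algebraMap ℝ ℂ)) ↔ IsEigen T μ := by
  rw [spectrum.mem_iff, IsEigen, charpoly_root_iff_det, Algebra.algebraMap_eq_smul_one]
  constructor
  · intro h
    by_contra hd
    exact h ((Matrix.isUnit_iff_isUnit_det _).2 (isUnit_iff_ne_zero.2 hd))
  · intro hd h
    have := (Matrix.isUnit_iff_isUnit_det _).1 h
    rw [hd] at this
    exact not_isUnit_zero this

lemma entry_norm_le_linfty {k : ℕ} (M : Matrix (Fin k) (Fin k) ℂ) (i j : Fin k) :
    ‖M i j‖ ≤ ‖M‖ := by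
  have h1 : ‖M i j‖₊ ≤ ‖M‖₊ := by
    rw [Matrix.linfty_opNNNorm_def]
    refine le_trans ?_ (Finset.le_sup (Finset.mem_univ i))
    exact Finset.single_le_sum (f := fun j' => ‖M i j'‖₊) (fun _ _ => zero_le)
      (Finset.mem_univ j)
  exact_mod_cast h1

lemma pow_entry_tendsto_zero {k : ℕ} (T : Matrix (Fin k) (Fin k) ℝ)
    (h : ∀ μ : ℂ, IsEigen T μ → ‖μ‖ < 1) (i j : Fin k) :
    Tendsto (fun N => (T ^ N) i j) atTop (𝓝 0) := by
  have hk : 0 < k := i.pos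
  haveI : Nonempty (Fin k) := ⟨i⟩
  set a := T.map (algebraMap ℝ ℂ) with ha
  have hspec : spectralRadius ℂ a < 1 := by
    have hne : (spectrum ℂ a).Nonempty := spectrum.nonempty a
    obtain ⟨z, hz, hzr⟩ := spectrum.exists_nnnorm_eq_spectralRadius_of_nonempty hne
    rw [← hzr]
    have : ‖z‖ < 1 := h z ((spectrum_iff_isEigen T z).1 hz)
    rw [show ((1 : ℝ≥0∞)) = ((1 : NNReal) : ℝ≥0∞) from rfl, ENNReal.coe_lt_coe]
    rw [← NNReal.coe_lt_coe]
    simpa using this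
  obtain ⟨r, hr1, hr2⟩ := ENNReal.lt_iff_exists_nnreal_btwn.1 hspec
  have hrlt1 : (r : ℝ) < 1 := by exact_mod_cast hr2
  have hlimsup := spectrum.limsup_pow_nnnorm_pow_one_div_le_spectralRadius a
  have hev : ∀ᶠ N : ℕ in atTop, (‖a ^ N‖₊ : ℝ≥0∞) ^ (1 / (N : ℝ)) < (r : ℝ≥0∞) :=
    Filter.eventually_lt_of_limsup_lt (lt_of_le_of_lt hlimsup hr1)
  have hev2 : ∀ᶠ N : ℕ in atTop, ‖a ^ N‖ ≤ (r : ℝ) ^ N := by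
    filter_upwards [hev, Filter.eventually_ge_atTop 1] with N hN hN1
    have hNne : (N : ℝ) ≠ 0 := by positivity
    have hx : (‖a ^ N‖₊ : ℝ≥0∞) < (r : ℝ≥0∞) ^ (N : ℝ) := by
      calc (‖a ^ N‖₊ : ℝ≥0∞)
          = ((‖a ^ N‖₊ : ℝ≥0∞) ^ (1 / (N : ℝ))) ^ (N : ℝ) := by
            rw [← ENNReal.rpow_mul, one_div_mul_cancel hNne, ENNReal.rpow_one]
        _ < (r : ℝ≥0∞) ^ (N : ℝ) := by
            apply ENNReal.rpow_lt_rpow hN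
            positivity
    rw [ENNReal.rpow_natCast, ← ENNReal.coe_pow, ENNReal.coe_lt_coe] at hx
    have := hx.le
    rw [← NNReal.coe_le_coe] at this
    simpa using this
  apply squeeze_zero_norm' (a := fun N => (r : ℝ) ^ N)
  · filter_upwards [hev2] with N hN
    have hmap : a ^ N = (T ^ N).map (algebraMap ℝ ℂ) := by
      rw [ha]
      exact (map_pow ((algebraMap ℝ ℂ).mapMatrix) T N).symm
    have : ‖(a ^ N) i j‖ ≤ ‖a ^ N‖ := entry_norm_le_linfty _ i j
    rw [hmap] at this
    simp only [Matrix.map_apply] at this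
    calc ‖(T ^ N) i j‖ = ‖(algebraMap ℝ ℂ) ((T ^ N) i j)‖ := by
          simp [Complex.norm_real]
      _ ≤ ‖a ^ N‖ := by rw [hmap]; exact this
      _ ≤ (r : ℝ) ^ N := hN
  · exact tendsto_pow_atTop_nhds_zero_of_lt_one r.coe_nonneg hrlt1

end Analytic

/-! ### entrywise positivity helpers -/

lemma entry_mul_nonneg {a b c : ℕ} {M : Matrix (Fin a) (Fin b) ℝ} {N : Matrix (Fin b) (Fin c) ℝ}
    (hM : ∀ i j, 0 ≤ M i j) (hN : ∀ i j, 0 ≤ N i j) : ∀ i j, 0 ≤ (M * N) i j := by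
  intro i j
  rw [Matrix.mul_apply]
  exact Finset.sum_nonneg fun k _ => mul_nonneg (hM i k) (hN k j)

lemma entry_pow_nonneg {a : ℕ} {T : Matrix (Fin a) (Fin a) ℝ}
    (hT : ∀ i j, 0 ≤ T i j) : ∀ N : ℕ, ∀ i j, 0 ≤ (T ^ N) i j := by
  intro N
  induction N with
  | zero => intro i j; simp [Matrix.one_apply]; split <;> norm_num
  | succ N ih => rw [pow_succ]; exact entry_mul_nonneg ih hT

lemma mulVec_entry_nonneg {a b : ℕ} {M : Matrix (Fin a) (Fin b) ℝ}
    (hM : ∀ i j, 0 ≤ M i j) {v : Fin b → ℝ} (hv : ∀ j, 0 ≤ v j) :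
    ∀ i, 0 ≤ M.mulVec v i := by
  intro i
  simp only [Matrix.mulVec, dotProduct]
  exact Finset.sum_nonneg fun k _ => mul_nonneg (hM i k) (hv k)

lemma mulVec_mono {a b : ℕ} {M : Matrix (Fin a) (Fin b) ℝ}
    (hM : ∀ i j, 0 ≤ M i j) {v w : Fin b → ℝ} (h : ∀ j, v j ≤ w j) :
    ∀ i, M.mulVec v i ≤ M.mulVec w i := by
  intro i
  simp only [Matrix.mulVec, dotProduct]
  exact Finset.sum_le_sum fun k _ => mul_le_mul_of_nonneg_left (h k) (hM i k)

/-- eigenvalue transfer between `P * Q` and `Q * P` -/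
lemma eigen_transfer {a b : ℕ} (P : Matrix (Fin a) (Fin b) ℝ) (Q : Matrix (Fin b) (Fin a) ℝ)
    {μ : ℂ} (hμ : μ ≠ 0) (h : IsEigen (P * Q) μ) : IsEigen (Q * P) μ := by
  obtain ⟨z, hz, heig⟩ := exists_eigenvector _ μ h
  rw [Matrix.map_mul] at heig
  set Pc := P.map (algebraMap ℝ ℂ)
  set Qc := Q.map (algebraMap ℝ ℂ)
  set y := Qc.mulVec z with hy
  have hyz : Pc.mulVec y = μ • z := by
    rw [hy, Matrix.mulVec_mulVec, heig]
  have hy0 : y ≠ 0 := by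
    intro h0
    apply hz
    have : Pc.mulVec y = 0 := by rw [h0, Matrix.mulVec_zero]
    rw [hyz] at this
    exact (smul_eq_zero.mp this).resolve_left hμ
  apply isRoot_of_eigenvector _ μ y hy0
  rw [Matrix.map_mul, ← Matrix.mulVec_mulVec, hyz, Matrix.mulVec_smul, hy]

theorem stmt4 {m n : ℕ} (A U V : Matrix (Fin m) (Fin n) ℝ)
    (Ad : Matrix (Fin n) (Fin m) ℝ) (Ud : Matrix (Fin n) (Fin m) ℝ)
    (hps : ProperSplitting A U V) (hA : IsMP A Ad) (hU : IsMP U Ud)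
    (hUd : EntryNonneg Ud) (hVUd : EntryNonneg (V * Ud)) :
    EntryNonneg Ad ↔ specRad (Ud * V) < 1 := by
  set T : Matrix (Fin m) (Fin m) ℝ := V * Ud with hT
  have hkey : Ad = Ud + Ad * T := key_identity hps hA hU
  have hTnn : ∀ i j, 0 ≤ T i j := hVUd
  -- geometric sum identity : Ad = Ud * (∑_{k<N} T^k) + Ad * T^N
  have hgeom : ∀ N : ℕ, Ad = Ud * (∑ k ∈ Finset.range N, T ^ k) + Ad * T ^ N := by
    intro N
    induction N with
    | zero => simp
    | succ N ih =>
      calc Ad = Ud * (∑ k ∈ Finset.range N, T ^ k) + Ad * T ^ N := ih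
        _ = Ud * (∑ k ∈ Finset.range N, T ^ k) + (Ud + Ad * T) * T ^ N := by rw [← hkey]
        _ = Ud * (∑ k ∈ Finset.range (N + 1), T ^ k) + Ad * T ^ (N + 1) := by
            rw [Finset.sum_range_succ, Matrix.mul_add, Matrix.add_mul]
            rw [Matrix.mul_assoc, ← pow_succ']
            abel
  constructor
  · -- forward : Ad ≥ 0 → specRad < 1
    intro hAd
    by_contra hlt
    obtain ⟨μ, hμeig, hμ1⟩ := exists_eigen_ge_of_not_lt _ hlt
    have hμ0 : μ ≠ 0 := by
      intro h0; rw [h0] at hμ1; simp at hμ1; linarith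
    have hTeig : IsEigen T μ := by rw [hT]; exact eigen_transfer Ud V hμ0 hμeig
    obtain ⟨y, hy0, hyeig⟩ := exists_eigenvector _ μ hTeig
    set w : Fin m → ℝ := fun i => ‖y i‖ with hw
    have hwnn : ∀ i, 0 ≤ w i := fun i => norm_nonneg _
    obtain ⟨i0, hi0⟩ : ∃ i, y i ≠ 0 := by
      by_contra hcon
      push_neg at hcon
      exact hy0 (funext hcon)
    have hwi0 : 0 < w i0 := by
      rw [hw]; exact norm_pos_iff.mpr hi0
    -- |μ| • w ≤ T w
    have hTw : ∀ i, ‖μ‖ * w i ≤ T.mulVec w i := by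
      intro i
      have h1 : ‖μ‖ * w i = ‖(T.map (algebraMap ℝ ℂ)).mulVec y i‖ := by
        rw [hyeig]
        simp [hw]
      rw [h1]
      have h2 : (T.map (algebraMap ℝ ℂ)).mulVec y i = ∑ j, (algebraMap ℝ ℂ) (T i j) * y j := by
        simp [Matrix.mulVec, dotProduct, Matrix.map_apply]
      rw [h2]
      refine le_trans (norm_sum_le _ _) ?_
      apply le_of_eq
      have h3 : ∀ j, ‖(algebraMap ℝ ℂ) (T i j) * y j‖ = T i j * w j := by
        intro j
        rw [norm_mul]
        congr 1
        simpa using abs_of_nonneg (hTnn i j)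
      rw [Finset.sum_congr rfl fun j _ => h3 j]
      simp [Matrix.mulVec, dotProduct, hw]
    have hone : ∀ i, w i ≤ T.mulVec w i := by
      intro i
      calc w i = 1 * w i := (one_mul _).symm
        _ ≤ ‖μ‖ * w i := by
            apply mul_le_mul_of_nonneg_right hμ1 (hwnn i)
        _ ≤ T.mulVec w i := hTw i
    have hTk : ∀ N : ℕ, ∀ i, w i ≤ (T ^ N).mulVec w i := by
      intro N
      induction N with
      | zero => intro i; simp [Matrix.one_mulVec]
      | succ N ih =>
        intro i
        have : (T ^ (N + 1)).mulVec w = (T ^ N).mulVec (T.mulVec w) := by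
          rw [pow_succ, ← Matrix.mulVec_mulVec]
        rw [this]
        calc w i ≤ (T ^ N).mulVec w i := ih i
          _ ≤ (T ^ N).mulVec (T.mulVec w) i :=
              mulVec_mono (entry_pow_nonneg hTnn N) hone i
    -- N * (Ud w) ≤ Ad w
    have hN : ∀ N : ℕ, ∀ i, (N : ℝ) * Ud.mulVec w i ≤ Ad.mulVec w i := by
      intro N i
      have h1 : Ad.mulVec w i
          = (Ud * (∑ k ∈ Finset.range N, T ^ k)).mulVec w i + (Ad * T ^ N).mulVec w i := by
        conv_lhs => rw [hgeom N]
        rw [Matrix.add_mulVec]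
        rfl
      have h2 : 0 ≤ (Ad * T ^ N).mulVec w i :=
        mulVec_entry_nonneg (entry_mul_nonneg hAd (entry_pow_nonneg hTnn N)) hwnn i
      have h3 : (N : ℝ) * Ud.mulVec w i ≤ (Ud * (∑ k ∈ Finset.range N, T ^ k)).mulVec w i := by
        rw [← Matrix.mulVec_mulVec]
        have hsum : ∀ i', (N : ℝ) * w i' ≤ (∑ k ∈ Finset.range N, T ^ k).mulVec w i' := by
          intro i'
          have hmv : ∀ M : ℕ, (∑ k ∈ Finset.range M, T ^ k).mulVec w
              = ∑ k ∈ Finset.range M, (T ^ k).mulVec w := by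
            intro M
            induction M with
            | zero => simp
            | succ M ih =>
              rw [Finset.sum_range_succ, Finset.sum_range_succ, Matrix.add_mulVec, ih]
          have : (∑ k ∈ Finset.range N, T ^ k).mulVec w i'
              = ∑ k ∈ Finset.range N, (T ^ k).mulVec w i' := by
            rw [hmv N]
            exact Finset.sum_apply _ _ _
          rw [this]
          calc (N : ℝ) * w i' = ∑ _k ∈ Finset.range N, w i' := by
                rw [Finset.sum_const, Finset.card_range, nsmul_eq_mul]
            _ ≤ ∑ k ∈ Finset.range N, (T ^ k).mulVec w i' :=
                Finset.sum_le_sum fun k _ => hTk k i'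
        calc (N : ℝ) * Ud.mulVec w i = Ud.mulVec (fun i' => (N : ℝ) * w i') i := by
              have : (fun i' => (N : ℝ) * w i') = (N : ℝ) • w := by ext i'; simp
              rw [this, Matrix.mulVec_smul]
              simp
          _ ≤ Ud.mulVec ((∑ k ∈ Finset.range N, T ^ k).mulVec w) i :=
              mulVec_mono hUd hsum i
      linarith
    -- Ud w = 0
    have hUdw : ∀ i, Ud.mulVec w i = 0 := by
      intro i
      have hnn : 0 ≤ Ud.mulVec w i := mulVec_entry_nonneg hUd hwnn i
      rcases eq_or_lt_of_le hnn with h0 | hpos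
      · exact h0.symm
      · exfalso
        obtain ⟨N, hNgt⟩ := exists_nat_gt (Ad.mulVec w i / Ud.mulVec w i)
        have := hN N i
        rw [div_lt_iff₀ hpos] at hNgt
        linarith
    have hTw0 : T.mulVec w = 0 := by
      have h0 : Ud.mulVec w = 0 := funext hUdw
      rw [hT, ← Matrix.mulVec_mulVec, h0, Matrix.mulVec_zero]
    have : ‖μ‖ * w i0 ≤ 0 := by
      have := hTw i0
      rw [hTw0] at this
      simpa using this
    nlinarith [hwi0, hμ1]
  · -- reverse : specRad < 1 → Ad ≥ 0
    intro hlt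
    have heigT : ∀ μ : ℂ, IsEigen T μ → ‖μ‖ < 1 := by
      intro μ hμ
      by_cases hμ0 : μ = 0
      · rw [hμ0]; simp
      · have : IsEigen (Ud * V) μ := by
          rw [hT] at hμ
          exact eigen_transfer V Ud hμ0 hμ
        exact lt_of_le_of_lt (abs_le_specRad_of_isEigen this) hlt
    have hdet : IsUnit (1 - T).det := by
      rw [isUnit_iff_ne_zero]
      intro hd0
      have : IsEigen T 1 := by
        rw [IsEigen, charpoly_root_iff_det, one_smul]
        have hmap : ((1 - T).map (algebraMap ℝ ℂ))
            = (1 : Matrix (Fin m) (Fin m) ℂ) - T.map (algebraMap ℝ ℂ) := by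
          have := map_sub ((algebraMap ℝ ℂ).mapMatrix) (1 : Matrix (Fin m) (Fin m) ℝ) T
          simpa [RingHom.mapMatrix_apply] using this
        rw [← hmap, ← RingHom.mapMatrix_apply, ← RingHom.map_det, hd0, map_zero]
      have := heigT 1 this
      simp at this
    set B := (1 - T)⁻¹ with hB
    have hB1 : (1 - T) * B = 1 := Matrix.mul_nonsing_inv _ hdet
    have hSN : ∀ N : ℕ, (∑ k ∈ Finset.range N, T ^ k) = B - T ^ N * B := by
      intro N
      have hgs : (∑ k ∈ Finset.range N, T ^ k) * (1 - T) = 1 - T ^ N := by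
        have := geom_sum_mul T N
        calc (∑ k ∈ Finset.range N, T ^ k) * (1 - T)
            = -((∑ k ∈ Finset.range N, T ^ k) * (T - 1)) := by
              rw [← Matrix.mul_neg]; congr 1; abel
          _ = -(T ^ N - 1) := by rw [this]
          _ = 1 - T ^ N := by abel
      calc (∑ k ∈ Finset.range N, T ^ k)
          = (∑ k ∈ Finset.range N, T ^ k) * ((1 - T) * B) := by rw [hB1, Matrix.mul_one]
        _ = ((∑ k ∈ Finset.range N, T ^ k) * (1 - T)) * B := by rw [Matrix.mul_assoc]
        _ = (1 - T ^ N) * B := by rw [hgs]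
        _ = B - T ^ N * B := by rw [Matrix.sub_mul, Matrix.one_mul]
    have hBnn : ∀ i j, 0 ≤ B i j := by
      intro i j
      have hX : Tendsto (fun N => (T ^ N * B) i j) atTop (nhds 0) := by
        have : ∀ N, (T ^ N * B) i j = ∑ k, (T ^ N) i k * B k j := by
          intro N; rw [Matrix.mul_apply]
        rw [funext this]
        have h0 : (0 : ℝ) = ∑ _k : Fin m, (0 : ℝ) := by simp
        rw [h0]
        apply tendsto_finset_sum
        intro k _
        simpa using (pow_entry_tendsto_zero T heigT i k).mul_const (B k j)
      have htend : Tendsto (fun N => (∑ k ∈ Finset.range N, T ^ k) i j) atTop (nhds (B i j)) := by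
        have heq : (fun N => (∑ k ∈ Finset.range N, T ^ k) i j)
            = fun N => B i j - (T ^ N * B) i j := by
          ext N
          rw [hSN N]
          simp [Matrix.sub_apply]
        rw [heq]
        simpa using tendsto_const_nhds.sub hX
      apply ge_of_tendsto' htend
      intro N
      have : (∑ k ∈ Finset.range N, T ^ k) i j = ∑ k ∈ Finset.range N, (T ^ k) i j :=
        Matrix.sum_apply _ _ _ _
      rw [this]
      exact Finset.sum_nonneg fun k _ => entry_pow_nonneg hTnn k i j
    have hAdB : Ad = Ud * B := by
      have h1 : Ad * (1 - T) = Ud := by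
        rw [Matrix.mul_sub, Matrix.mul_one]
        exact sub_eq_iff_eq_add.mpr hkey
      calc Ad = Ad * ((1 - T) * B) := by rw [hB1, Matrix.mul_one]
        _ = (Ad * (1 - T)) * B := by rw [Matrix.mul_assoc]
        _ = Ud * B := by rw [h1]
    intro i j
    rw [hAdB]
    exact entry_mul_nonneg hUd hBnn i j
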